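/- Let d ≥ 1, let Ω ⊆ ℝ^d be open and bounded, and let E ⊆ Ω be nonempty, closed and convex. Let α, β > 0, and let w : (0,1) × ℝ^d → ℝ be such that w(t,·) is differentiable with Lipschitz gradient for a.e. t, w and ∇_x w are Carathéodory, ∫₀¹ ‖w(t,·)‖²_{C^{1,1}} dt < ∞, and w(t,x) = 0 and ∇_x w(t,x) = 0 for every x ∉ E and a.e. t. Let γ : [0,1] → closure(Ω) be AC² with derivative g such that F(γ) ≠ 0 and γ satisfies the weak Euler–Lagrange equation: −∫₀¹ ∇_x w(t, γ(t)) · η(t) dt = β F(γ) ∫₀¹ g(t) · h(t) dt for every AC² curve η : [0,1] → ℝ^d with derivative h. Then γ(t) ∈ E for all t ∈ [0,1]. (Proposition A.7: stationary points of the insertion-step functional F with nonzero energy are confined to E; in particular minimizing curves of the insertion step lie in the interior of Ω.) -/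

import Mathlib

open MeasureTheory Set
open scoped RealInnerProductSpace

/-- A curve `γ : [0,1] → ℝ^d` is AC² with derivative `g` if `g ∈ L²((0,1); ℝ^d)` and
`γ(t) = γ(0) + ∫₀ᵗ g(s) ds` for all `t ∈ [0,1]`. -/
def IsAC2 {d : ℕ} (γ g : ℝ → EuclideanSpace ℝ (Fin d)) : Prop :=
  MemLp g 2 (volume.restrict (Ioc (0:ℝ) 1)) ∧
  ∀ t ∈ Icc (0:ℝ) 1, γ t = γ 0 + ∫ s in (0:ℝ)..t, g s

/-- `u : (0,1) × ℝ^d → F` is Carathéodory: measurable in `t` for every `x`, and continuous in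
`x` for a.e. `t ∈ (0,1)`. -/
def Caratheodory {E F : Type*} [TopologicalSpace E] [TopologicalSpace F] [MeasurableSpace F]
    (u : ℝ → E → F) : Prop :=
  (∀ x, Measurable fun t => u t x) ∧
  ∀ᵐ t ∂(volume.restrict (Ioo (0:ℝ) 1)), Continuous (u t)

/-- The (smallest) Lipschitz constant of a map. -/
noncomputable def lipConst {E F : Type*} [PseudoMetricSpace E] [PseudoMetricSpace F]
    (f : E → F) : ℝ :=
  sInf {K : ℝ | 0 ≤ K ∧ LipschitzWith (Real.toNNReal K) f}

/-- The `C^{1,1}` norm `‖φ‖_{C^{1,1}} := sup|φ| + sup|∇φ| + Lip(∇φ)`. -/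
noncomputable def C11norm {d : ℕ} (φ : EuclideanSpace ℝ (Fin d) → ℝ) : ℝ :=
  (⨆ x, |φ x|) + (⨆ x, ‖gradient φ x‖) + lipConst (gradient φ)

/-- The linear part `W(γ) := −∫₀¹ w(t, γ(t)) dt` of the insertion-step functional. -/
noncomputable def Wc {d : ℕ} (w : ℝ → EuclideanSpace ℝ (Fin d) → ℝ)
    (γ : ℝ → EuclideanSpace ℝ (Fin d)) : ℝ :=
  -∫ t in (0:ℝ)..1, w t (γ t)

/-- `L(γ) := (β/2) ∫₀¹ |γ̇(t)|² dt + α`. -/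
noncomputable def Lc {d : ℕ} (α β : ℝ) (g : ℝ → EuclideanSpace ℝ (Fin d)) : ℝ :=
  (β / 2) * (∫ t in (0:ℝ)..1, ‖g t‖ ^ 2) + α

/-- The insertion-step functional `F(γ) := W(γ)/L(γ)`. -/
noncomputable def Fc {d : ℕ} (α β : ℝ) (w : ℝ → EuclideanSpace ℝ (Fin d) → ℝ)
    (γ g : ℝ → EuclideanSpace ℝ (Fin d)) : ℝ :=
  Wc w γ / Lc α β g

private lemma lipConst_nonneg' {X F : Type*} [PseudoMetricSpace X] [PseudoMetricSpace F]
    (f : X → F) : 0 ≤ lipConst f :=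
  Real.sInf_nonneg fun _ hK => hK.1

private lemma dist_le_lipConst {X F : Type*} [PseudoMetricSpace X] [PseudoMetricSpace F]
    {f : X → F} (hf : ∃ K : NNReal, LipschitzWith K f) (x y : X) :
    dist (f x) (f y) ≤ lipConst f * dist x y := by
  obtain ⟨K, hK⟩ := hf
  have hne : ((K : ℝ)) ∈ {K : ℝ | 0 ≤ K ∧ LipschitzWith (Real.toNNReal K) f} :=
    ⟨K.coe_nonneg, by rwa [Real.toNNReal_coe]⟩
  refine le_of_forall_pos_le_add fun ε hε => ?_
  have hlt : sInf {K : ℝ | 0 ≤ K ∧ LipschitzWith (Real.toNNReal K) f} <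
      lipConst f + ε / (dist x y + 1) := by
    have : (0:ℝ) < ε / (dist x y + 1) := by positivity
    simpa [lipConst] using (lt_add_of_pos_right (lipConst f) this)
  obtain ⟨K', hK', hK'lt⟩ := exists_lt_of_csInf_lt ⟨_, hne⟩ hlt
  have h1 : dist (f x) (f y) ≤ K' * dist x y := by
    have := hK'.2.dist_le_mul x y
    rwa [Real.coe_toNNReal _ hK'.1] at this
  have h2 : K' * dist x y ≤ (lipConst f + ε / (dist x y + 1)) * dist x y :=
    mul_le_mul_of_nonneg_right hK'lt.le dist_nonneg
  have h3 : ε / (dist x y + 1) * dist x y ≤ ε := by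
    rw [div_mul_eq_mul_div, div_le_iff₀ (by positivity)]
    nlinarith [dist_nonneg (x := x) (y := y), hε.le]
  nlinarith [dist_nonneg (x := x) (y := y)]

private lemma carath_comp_aesm {d : ℕ} (μ : Measure ℝ)
    (u : ℝ → EuclideanSpace ℝ (Fin d) → EuclideanSpace ℝ (Fin d))
    (hm : ∀ x, Measurable fun t => u t x)
    (hc : ∀ᵐ t ∂μ, Continuous (u t))
    (k : ℝ → EuclideanSpace ℝ (Fin d)) (hk : Continuous k) :
    AEStronglyMeasurable (fun t => u t (k t)) μ := by
  classical
  set N := toMeasurable μ {t | ¬ Continuous (u t)} with hNdef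
  have hNmeas : MeasurableSet N := measurableSet_toMeasurable _ _
  have hNnull : μ N = 0 := by
    rw [hNdef, measure_toMeasurable]
    rwa [← ae_iff]
  set u' : ℝ → EuclideanSpace ℝ (Fin d) → EuclideanSpace ℝ (Fin d) :=
    fun t x => if t ∈ N then 0 else u t x with hu'
  have hm' : ∀ x, Measurable fun t => u' t x := fun x =>
    Measurable.ite hNmeas measurable_const (hm x)
  have hc' : ∀ t, Continuous (u' t) := by
    intro t
    by_cases ht : t ∈ N
    · simpa [hu', ht] using continuous_const
    · simp only [hu', ht, if_false]
      by_contra hcont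
      exact ht (subset_toMeasurable _ _ hcont)
  have hunc : Measurable (Function.uncurry fun (x : EuclideanSpace ℝ (Fin d)) (t : ℝ) => u' t x) :=
    measurable_uncurry_of_continuous_of_measurable hc' hm'
  have hmeas : Measurable fun t => u' t (k t) :=
    hunc.comp (hk.measurable.prodMk measurable_id)
  refine hmeas.aestronglyMeasurable.congr ?_
  have : ∀ᵐ t ∂μ, t ∉ N := by
    rw [ae_iff]; simpa using hNnull
  filter_upwards [this] with t ht
  simp [hu', ht]

private lemma integrable_inner_of_mem2 {α : Type*} {m : MeasurableSpace α} {μ : Measure α}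
    {d : ℕ} {f h : α → EuclideanSpace ℝ (Fin d)}
    (hf : MemLp f 2 μ) (hh : MemLp h 2 μ) :
    Integrable (fun x => ⟪f x, h x⟫) μ := by
  have hint := L2.integrable_inner (𝕜 := ℝ) (hf.toLp f) (hh.toLp h)
  apply hint.congr
  filter_upwards [hf.coeFn_toLp, hh.coeFn_toLp] with x h1 h2
  rw [h1, h2]

set_option maxHeartbeats 2000000 in
/-- Proposition A.7: stationary points of the insertion-step functional with nonzero energy
are confined to the set `E`: if `γ` takes values in `closure Ω`, `F(γ) ≠ 0`, and `γ` solves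
the weak Euler–Lagrange equation
`−∫₀¹ ∇w_t(γ) · η dt = β F(γ) ∫₀¹ γ̇ · η̇ dt` for every AC² curve `η`,
then `γ(t) ∈ E` for all `t ∈ [0,1]`. -/
theorem stationary_points_confined_to_E
    {d : ℕ} (hd : 1 ≤ d)
    (Ω : Set (EuclideanSpace ℝ (Fin d))) (hΩopen : IsOpen Ω)
    (hΩbdd : Bornology.IsBounded Ω)
    (E : Set (EuclideanSpace ℝ (Fin d))) (hEne : E.Nonempty)
    (hEcl : IsClosed E) (hEconv : Convex ℝ E) (hEΩ : E ⊆ Ω)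
    (α β : ℝ) (hα : 0 < α) (hβ : 0 < β)
    (w : ℝ → EuclideanSpace ℝ (Fin d) → ℝ)
    (hw : ∀ᵐ t ∂(volume.restrict (Ioo (0:ℝ) 1)),
      Differentiable ℝ (w t) ∧ ∃ K : NNReal, LipschitzWith K (gradient (w t)))
    (hCarw : Caratheodory w)
    (hCargrad : Caratheodory fun t => gradient (w t))
    (hnorm : IntervalIntegrable (fun t => (C11norm (w t)) ^ 2) volume 0 1)
    (hsupp : ∀ᵐ t ∂(volume.restrict (Ioo (0:ℝ) 1)),
      ∀ x ∉ E, w t x = 0 ∧ gradient (w t) x = 0)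
    (γ g : ℝ → EuclideanSpace ℝ (Fin d)) (hγ : IsAC2 γ g)
    (hrange : ∀ t ∈ Icc (0:ℝ) 1, γ t ∈ closure Ω)
    (hF0 : Fc α β w γ g ≠ 0)
    (hEL : ∀ η h : ℝ → EuclideanSpace ℝ (Fin d), IsAC2 η h →
      -∫ t in (0:ℝ)..1, ⟪gradient (w t) (γ t), η t⟫ =
        β * Fc α β w γ g * ∫ t in (0:ℝ)..1, ⟪g t, h t⟫) :
    ∀ t ∈ Icc (0:ℝ) 1, γ t ∈ E := by
  classical
  obtain ⟨hg2, hγeq⟩ := hγ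
  set ν : Measure ℝ := volume.restrict (Ioc (0:ℝ) 1) with hνdef
  have hνIoo : ν = volume.restrict (Ioo (0:ℝ) 1) :=
    (Measure.restrict_congr_set Ioo_ae_eq_Ioc).symm
  haveI : IsFiniteMeasure ν := by
    constructor
    rw [hνdef, Measure.restrict_apply_univ]
    simp
  set c : ℝ := β * Fc α β w γ g with hcdef
  have hc : c ≠ 0 := mul_ne_zero hβ.ne' hF0
  set G : ℝ → EuclideanSpace ℝ (Fin d) := fun t => gradient (w t) (γ t) with hGdef
  -- transfer of a.e. statements to subintervals
  have hae_sub : ∀ {P : ℝ → Prop}, (∀ᵐ t ∂(volume.restrict (Ioo (0:ℝ) 1)), P t) →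
      ∀ s r : ℝ, 0 ≤ s → r ≤ 1 → (∀ᵐ t ∂(volume.restrict (Ioc s r)), P t) := by
    intro P hP s r hs hr
    have h1 : volume.restrict (Ioc s r) = volume.restrict (Ioo s r) :=
      (Measure.restrict_congr_set Ioo_ae_eq_Ioc).symm
    rw [h1]
    exact ae_restrict_of_ae_restrict_of_subset (Ioo_subset_Ioo hs hr) hP
  -- integrability of g
  have hgIntOn : IntegrableOn g (Ioc (0:ℝ) 1) volume :=
    memLp_one_iff_integrable.mp (hg2.mono_exponent (by norm_num))
  -- continuity of γ on [0,1]
  have hγcont : ContinuousOn γ (Icc (0:ℝ) 1) := by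
    have hgIcc : IntegrableOn g (Icc (0:ℝ) 1) volume :=
      (integrableOn_Icc_iff_integrableOn_Ioc (f := g)).mpr hgIntOn
    have hprim : ContinuousOn (fun x => γ 0 + ∫ t in Ioc (0:ℝ) x, g t) (Icc (0:ℝ) 1) :=
      continuousOn_const.add (intervalIntegral.continuousOn_primitive (μ := volume) hgIcc)
    exact hprim.congr fun t ht => by
      rw [hγeq t ht, intervalIntegral.integral_of_le ht.1]
  -- the clamped version of γ, continuous on all of ℝ
  set γc : ℝ → EuclideanSpace ℝ (Fin d) := fun t => γ (max 0 (min t 1)) with hγcdef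
  have hclamp_mem : ∀ t : ℝ, max 0 (min t 1) ∈ Icc (0:ℝ) 1 := by
    intro t
    constructor
    · exact le_max_left _ _
    · exact max_le zero_le_one (min_le_right _ _)
  have hγccont : Continuous γc := by
    apply hγcont.comp_continuous
    · exact continuous_const.max (continuous_id.min continuous_const)
    · exact hclamp_mem
  have hγceq : ∀ t ∈ Icc (0:ℝ) 1, γc t = γ t := by
    intro t ht
    simp only [hγcdef]
    rw [min_eq_left ht.2, max_eq_right ht.1]
  -- measurability of G
  have hGaesm : AEStronglyMeasurable G ν := by
    rw [hνIoo]
    have h1 := carath_comp_aesm (volume.restrict (Ioo (0:ℝ) 1)) (fun t => gradient (w t))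
      hCargrad.1 hCargrad.2 γc hγccont
    refine h1.congr ?_
    filter_upwards [ae_restrict_mem measurableSet_Ioo] with t ht
    rw [hγceq t ⟨ht.1.le, ht.2.le⟩]
  -- a bound for G
  obtain ⟨R, hR⟩ := (Bornology.IsBounded.subset_closedBall hΩbdd.closure 0)
  set z : EuclideanSpace ℝ (Fin d) := (|R| + 1) • (EuclideanSpace.single (⟨0, hd⟩ : Fin d) (1:ℝ))
    with hzdef
  have hznorm : ‖z‖ = |R| + 1 := by
    rw [hzdef, norm_smul, EuclideanSpace.norm_single]
    simp [abs_of_nonneg (by positivity : (0:ℝ) ≤ |R| + 1)]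
  have hzE : z ∉ E := by
    intro hz
    have : z ∈ Metric.closedBall (0 : EuclideanSpace ℝ (Fin d)) R :=
      hR (subset_closure (hEΩ hz))
    rw [mem_closedBall_zero_iff, hznorm] at this
    have h2 := le_abs_self R
    linarith
  have hsuppν : ∀ᵐ t ∂ν, ∀ x ∉ E, w t x = 0 ∧ gradient (w t) x = 0 := by
    rw [hνIoo]; exact hsupp
  have hwν : ∀ᵐ t ∂ν, Differentiable ℝ (w t) ∧
      ∃ K : NNReal, LipschitzWith K (gradient (w t)) := by
    rw [hνIoo]; exact hw
  have hGbound : ∀ᵐ t ∂ν, ‖G t‖ ≤ (2 * |R| + 1) * (1 + (C11norm (w t))^2) := by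
    filter_upwards [hwν, hsuppν, ae_restrict_mem measurableSet_Ioc] with t hwt hsuppt ht
    have hγt : γ t ∈ closure Ω := hrange t ⟨ht.1.le, ht.2⟩
    have hγtn : ‖γ t‖ ≤ R := by
      have := hR hγt; rwa [mem_closedBall_zero_iff] at this
    have hz0 : gradient (w t) z = 0 := (hsuppt z hzE).2
    have hdist : dist (γ t) z ≤ 2 * |R| + 1 := by
      have h1 : dist (γ t) z ≤ ‖γ t‖ + ‖z‖ := by
        rw [dist_eq_norm]
        exact (norm_sub_le _ _)
      have := le_abs_self R
      rw [hznorm] at h1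
      linarith
    have hlip := dist_le_lipConst hwt.2 (γ t) z
    rw [hz0, dist_zero_right] at hlip
    have hlipC : lipConst (gradient (w t)) ≤ C11norm (w t) := by
      have h1 : (0:ℝ) ≤ ⨆ x, |w t x| := Real.iSup_nonneg fun x => abs_nonneg _
      have h2 : (0:ℝ) ≤ ⨆ x, ‖gradient (w t) x‖ := Real.iSup_nonneg fun x => norm_nonneg _
      simp only [C11norm]
      linarith
    have hCnn : (0:ℝ) ≤ C11norm (w t) :=
      le_trans (lipConst_nonneg' _) hlipC
    calc ‖G t‖ ≤ lipConst (gradient (w t)) * dist (γ t) z := hlip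
      _ ≤ C11norm (w t) * (2 * |R| + 1) := by
          apply mul_le_mul hlipC hdist dist_nonneg hCnn
      _ ≤ (2 * |R| + 1) * (1 + (C11norm (w t))^2) := by
          nlinarith [sq_nonneg (C11norm (w t) - 1), abs_nonneg R]
  have hnormIoc : IntegrableOn (fun t => (C11norm (w t))^2) (Ioc (0:ℝ) 1) volume :=
    (intervalIntegrable_iff_integrableOn_Ioc_of_le zero_le_one).mp hnorm
  have hGint : Integrable G ν := by
    have hbd : Integrable (fun t => (2 * |R| + 1) * (1 + (C11norm (w t))^2)) ν :=
      ((integrable_const (1:ℝ)).add hnormIoc).const_mul _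
    exact hbd.mono' hGaesm hGbound
  have hGIO : IntegrableOn G (Ioc (0:ℝ) 1) volume := hGint
  have hGII : ∀ x y : ℝ, 0 ≤ x → x ≤ y → y ≤ 1 → IntervalIntegrable G volume x y := by
    intro x y hx hxy hy
    rw [intervalIntegrable_iff_integrableOn_Ioc_of_le hxy]
    exact hGIO.mono_set (Ioc_subset_Ioc hx hy)
  -- the function V
  set V : ℝ → EuclideanSpace ℝ (Fin d) := fun s => ∫ t in s..(1:ℝ), G t with hVdef
  have hVsplit : ∀ s ∈ Icc (0:ℝ) 1, V s = (∫ t in (0:ℝ)..1, G t) - ∫ t in (0:ℝ)..s, G t := by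
    intro s hs
    have hadj := intervalIntegral.integral_add_adjacent_intervals
      (hGII 0 s le_rfl hs.1 hs.2) (hGII s 1 hs.1 hs.2 le_rfl)
    exact (eq_sub_of_add_eq' hadj).symm ▸ rfl
  have hVcont : ContinuousOn V (Icc (0:ℝ) 1) := by
    have hprim : ContinuousOn (fun s => (∫ t in (0:ℝ)..1, G t) - ∫ t in Ioc (0:ℝ) s, G t)
        (Icc (0:ℝ) 1) :=
      continuousOn_const.sub (intervalIntegral.continuousOn_primitive (μ := volume)
        ((integrableOn_Icc_iff_integrableOn_Ioc (f := G)).mpr hGIO))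
    exact hprim.congr fun s hs => by
      rw [hVsplit s hs, intervalIntegral.integral_of_le hs.1]
  -- constant test functions: the total integral of G vanishes
  have hconst_test : ∀ cc : EuclideanSpace ℝ (Fin d), (∫ t in (0:ℝ)..1, ⟪G t, cc⟫) = 0 := by
    intro cc
    have hAC : IsAC2 (fun _ => cc) (fun _ => (0 : EuclideanSpace ℝ (Fin d))) := by
      constructor
      · exact memLp_const 0
      · intro t ht; simp
    have h0 := hEL (fun _ => cc) (fun _ => 0) hAC
    simp only [inner_zero_right, intervalIntegral.integral_zero, mul_zero] at h0
    exact neg_eq_zero.mp h0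
  have hV0 : V 0 = 0 := by
    have hGν : ∫ t, G t ∂ν = 0 := by
      apply integral_eq_zero_of_forall_integral_inner_eq_zero ℝ _ hGint
      intro cc
      have h1 := hconst_test cc
      rw [intervalIntegral.integral_of_le zero_le_one] at h1
      calc ∫ x, ⟪cc, G x⟫ ∂ν = ∫ x, ⟪G x, cc⟫ ∂ν :=
            integral_congr_ae (Filter.Eventually.of_forall fun x => real_inner_comm _ _)
        _ = 0 := by rw [hνdef]; exact h1
    rw [hVdef]
    simp only
    rw [intervalIntegral.integral_of_le zero_le_one, ← hνdef]
    exact hGν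
  -- the du Bois-Reymond argument: g = v a.e. where v := -(c⁻¹ • V)
  set m : ℝ → EuclideanSpace ℝ (Fin d) := fun s => c • g s + V s with hmdef
  have hVaesm : AEStronglyMeasurable V ν :=
    (hVcont.mono Ioc_subset_Icc_self).aestronglyMeasurable measurableSet_Ioc
  have hVbound : ∀ᵐ s ∂ν, ‖V s‖ ≤ ∫ t in Ioc (0:ℝ) 1, ‖G t‖ := by
    filter_upwards [ae_restrict_mem measurableSet_Ioc] with s hs
    rw [hVdef]
    simp only
    rw [intervalIntegral.integral_of_le hs.2]
    calc ‖∫ t in Ioc s 1, G t‖ ≤ ∫ t in Ioc s 1, ‖G t‖ := norm_integral_le_integral_norm _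
      _ ≤ ∫ t in Ioc (0:ℝ) 1, ‖G t‖ := by
          apply setIntegral_mono_set hGIO.norm
          · filter_upwards with t using norm_nonneg _
          · exact HasSubset.Subset.eventuallyLE (Ioc_subset_Ioc_left hs.1.le)
  have hV2 : MemLp V 2 ν := MemLp.of_bound hVaesm _ hVbound
  have hm2 : MemLp m 2 ν := (hg2.const_smul c).add hV2
  set h : ℝ → EuclideanSpace ℝ (Fin d) := (Ioc (0:ℝ) 1).indicator m with hhdef
  have hhm : h =ᵐ[ν] m := by
    filter_upwards [ae_restrict_mem measurableSet_Ioc] with s hs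
    rw [hhdef]
    exact indicator_of_mem hs _
  have hh2 : MemLp h 2 ν := hm2.ae_eq hhm.symm
  have hhν_int : Integrable h ν :=
    memLp_one_iff_integrable.mp (hh2.mono_exponent (by norm_num))
  have hhIO : IntegrableOn h (Ioc (0:ℝ) 1) volume := hhν_int
  set η : ℝ → EuclideanSpace ℝ (Fin d) := fun t => ∫ s in (0:ℝ)..t, h s with hηdef
  have hhAC : IsAC2 η h := by
    refine ⟨hh2, fun t ht => ?_⟩
    rw [hηdef]
    simp only
    rw [intervalIntegral.integral_same, zero_add]
  have hkey := hEL η h hhAC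
  -- Fubini
  set q : ℝ × ℝ → ℝ := fun p => if p.2 ≤ p.1 then ⟪G p.1, h p.2⟫ else 0 with hqdef
  have hGaem : AEMeasurable G ν := hGaesm.aemeasurable
  have hhaem : AEMeasurable h ν := hhν_int.aemeasurable
  have hq_aesm : AEStronglyMeasurable q (ν.prod ν) := by
    have h1 : AEStronglyMeasurable (fun p : ℝ × ℝ => ⟪G p.1, h p.2⟫) (ν.prod ν) := by
      apply AEStronglyMeasurable.inner
      · exact hGaem.aestronglyMeasurable.comp_fst (ν := ν)
      · exact hhaem.aestronglyMeasurable.comp_snd (μ := ν)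
    have heq : q = ({p : ℝ × ℝ | p.2 ≤ p.1}).indicator (fun p => ⟪G p.1, h p.2⟫) := by
      ext p
      rw [hqdef]
      rw [Set.indicator_apply]
      by_cases hp : p.2 ≤ p.1 <;> simp [hp]
    rw [heq]
    exact h1.indicator (measurableSet_le measurable_snd measurable_fst)
  have hq_int : Integrable q (ν.prod ν) := by
    have hbound : Integrable (fun p : ℝ × ℝ => ‖G p.1‖ * ‖h p.2‖) (ν.prod ν) :=
      hGint.norm.mul_prod hhν_int.norm
    apply hbound.mono' hq_aesm
    filter_upwards with p
    rw [hqdef]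
    by_cases hp : p.2 ≤ p.1
    · simp only [hp, if_true]
      exact norm_inner_le_norm _ _
    · simp only [hp, if_false, norm_zero]
      positivity
  have hswap : (∫ t, (∫ s, q (t, s) ∂ν) ∂ν) = ∫ s, (∫ t, q (t, s) ∂ν) ∂ν :=
    integral_integral_swap (f := fun t s => q (t, s)) hq_int
  have hLeval : ∀ t ∈ Ioc (0:ℝ) 1, (∫ s, q (t, s) ∂ν) = ⟪G t, η t⟫ := by
    intro t ht
    have h1 : ∀ s : ℝ, q (t, s) = (Iic t).indicator (fun s => ⟪G t, h s⟫) s := by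
      intro s
      rw [hqdef]
      by_cases hs : s ≤ t <;> simp [Set.indicator_apply, mem_Iic, hs]
    calc (∫ s, q (t, s) ∂ν)
        = ∫ s in Ioc (0:ℝ) 1, (Iic t).indicator (fun s => ⟪G t, h s⟫) s := by
          rw [hνdef]
          exact integral_congr_ae (Filter.Eventually.of_forall h1)
      _ = ∫ s in Ioc (0:ℝ) 1 ∩ Iic t, ⟪G t, h s⟫ := by
          rw [setIntegral_indicator measurableSet_Iic]
      _ = ∫ s in Ioc (0:ℝ) t, ⟪G t, h s⟫ := by
          rw [Ioc_inter_Iic, min_eq_right ht.2]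
      _ = ⟪G t, ∫ s in Ioc (0:ℝ) t, h s⟫ :=
          integral_inner (hhIO.mono_set (Ioc_subset_Ioc_right ht.2)) _
      _ = ⟪G t, η t⟫ := by
          rw [hηdef]
          simp only
          rw [intervalIntegral.integral_of_le ht.1.le]
  have hReval : ∀ s ∈ Ioc (0:ℝ) 1, (∫ t, q (t, s) ∂ν) = ⟪V s, h s⟫ := by
    intro s hs
    have h1 : ∀ t : ℝ, q (t, s) = (Ici s).indicator (fun t => ⟪h s, G t⟫) t := by
      intro t
      rw [hqdef]
      rw [Set.indicator_apply]
      by_cases hts : s ≤ t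
      · simp only [mem_Ici, hts, if_true]
        exact real_inner_comm _ _
      · simp only [mem_Ici, hts, if_false]
    calc (∫ t, q (t, s) ∂ν)
        = ∫ t in Ioc (0:ℝ) 1, (Ici s).indicator (fun t => ⟪h s, G t⟫) t := by
          rw [hνdef]
          exact integral_congr_ae (Filter.Eventually.of_forall h1)
      _ = ∫ t in Ioc (0:ℝ) 1 ∩ Ici s, ⟪h s, G t⟫ := by
          rw [setIntegral_indicator measurableSet_Ici]
      _ = ∫ t in Ioc s 1, ⟪h s, G t⟫ := by
          have hset : Ioc (0:ℝ) 1 ∩ Ici s = Icc s 1 := by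
            ext t
            simp only [mem_inter_iff, mem_Ioc, mem_Ici, mem_Icc]
            constructor
            · rintro ⟨⟨_, ht1⟩, hst⟩; exact ⟨hst, ht1⟩
            · rintro ⟨hst, ht1⟩; exact ⟨⟨lt_of_lt_of_le hs.1 hst, ht1⟩, hst⟩
          rw [hset, integral_Icc_eq_integral_Ioc]
      _ = ⟪h s, ∫ t in Ioc s 1, G t⟫ :=
          integral_inner (hGIO.mono_set (Ioc_subset_Ioc_left hs.1.le)) _
      _ = ⟪V s, h s⟫ := by
          rw [hVdef]
          simp only
          rw [intervalIntegral.integral_of_le hs.2, real_inner_comm]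
  have hVh_int : Integrable (fun s => ⟪V s, h s⟫) ν := integrable_inner_of_mem2 hV2 hh2
  have hgh_int : Integrable (fun s => ⟪c • g s, h s⟫) ν :=
    integrable_inner_of_mem2 (hg2.const_smul c) hh2
  have hmain : ∫ s, ⟪m s, h s⟫ ∂ν = 0 := by
    have e1 : (∫ t in (0:ℝ)..1, ⟪G t, η t⟫) = ∫ s, ⟪V s, h s⟫ ∂ν := by
      rw [intervalIntegral.integral_of_le zero_le_one, ← hνdef]
      calc (∫ t, ⟪G t, η t⟫ ∂ν) = ∫ t, (∫ s, q (t, s) ∂ν) ∂ν := by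
            rw [hνdef]
            exact setIntegral_congr_fun measurableSet_Ioc fun t ht => (hLeval t ht).symm
        _ = ∫ s, (∫ t, q (t, s) ∂ν) ∂ν := hswap
        _ = ∫ s, ⟪V s, h s⟫ ∂ν := by
            rw [hνdef]
            exact setIntegral_congr_fun measurableSet_Ioc fun s hs => hReval s hs
    have e2 : (∫ t in (0:ℝ)..1, ⟪g t, h t⟫) = ∫ s, ⟪g s, h s⟫ ∂ν := by
      rw [intervalIntegral.integral_of_le zero_le_one, ← hνdef]
    rw [e1, e2] at hkey
    have e3 : ∫ s, ⟪m s, h s⟫ ∂ν = (∫ s, ⟪c • g s, h s⟫ ∂ν) + ∫ s, ⟪V s, h s⟫ ∂ν := by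
      rw [← integral_add hgh_int hVh_int]
      apply integral_congr_ae
      filter_upwards with s
      rw [hmdef]
      simp [inner_add_left]
    have e4 : ∫ s, ⟪c • g s, h s⟫ ∂ν = c * ∫ s, ⟪g s, h s⟫ ∂ν := by
      simp_rw [real_inner_smul_left]
      exact integral_const_mul c _
    rw [e3, e4]
    linarith
  have hgv : ∀ᵐ s ∂ν, g s = -(c⁻¹ • V s) := by
    have hm0 : ∀ᵐ s ∂ν, m s = 0 := by
      have hinner : ∫ s, ⟪m s, h s⟫ ∂ν = ∫ s, ‖m s‖^2 ∂ν := by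
        apply integral_congr_ae
        filter_upwards [hhm] with s hs
        rw [hs, real_inner_self_eq_norm_sq]
      have hsq_int : Integrable (fun s => ‖m s‖^2) ν :=
        (memLp_two_iff_integrable_sq_norm hm2.1).mp hm2
      have h0 : ∫ s, ‖m s‖^2 ∂ν = 0 := by rw [← hinner]; exact hmain
      have hz := (integral_eq_zero_iff_of_nonneg_ae
        (Filter.Eventually.of_forall fun s => sq_nonneg _) hsq_int).mp h0
      filter_upwards [hz] with s hs
      have hs' : ‖m s‖^2 = 0 := hs
      have : ‖m s‖ = 0 := by nlinarith [norm_nonneg (m s)]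
      exact norm_eq_zero.mp this
    filter_upwards [hm0] with s hs
    rw [hmdef] at hs
    have hceq : c • g s = -V s := by
      have : c • g s + V s = 0 := hs
      linear_combination (norm := module) this
    calc g s = c⁻¹ • (c • g s) := by rw [smul_smul, inv_mul_cancel₀ hc, one_smul]
      _ = c⁻¹ • (-V s) := by rw [hceq]
      _ = -(c⁻¹ • V s) := by rw [smul_neg]
  set v : ℝ → EuclideanSpace ℝ (Fin d) := fun s => -(c⁻¹ • V s) with hvdef
  have hvcont : ContinuousOn v (Icc (0:ℝ) 1) := (hVcont.const_smul c⁻¹).neg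
  have hv0 : v 0 = 0 := by rw [hvdef]; simp [hV0]
  have hv1 : v 1 = 0 := by
    rw [hvdef]
    simp only
    rw [hVdef]
    simp [intervalIntegral.integral_same]
  have hγv : ∀ t ∈ Icc (0:ℝ) 1, γ t = γ 0 + ∫ s in (0:ℝ)..t, v s := by
    intro t ht
    rw [hγeq t ht]
    congr 1
    rw [intervalIntegral.integral_of_le ht.1, intervalIntegral.integral_of_le ht.1]
    apply integral_congr_ae
    have := ae_restrict_of_ae_restrict_of_subset (Ioc_subset_Ioc_right ht.2)
      (show ∀ᵐ s ∂(volume.restrict (Ioc (0:ℝ) 1)), g s = v s from hgv)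
    exact this
  -- constancy of V on intervals avoiding E
  have hVeq : ∀ a b : ℝ, 0 ≤ a → a ≤ b → b ≤ 1 → (∀ t, a < t → t < b → γ t ∉ E) →
      ∀ s ∈ Icc a b, V s = V b := by
    intro a b ha hab hb1 hnot s hs
    have hadj := intervalIntegral.integral_add_adjacent_intervals
      (hGII s b (ha.trans hs.1) hs.2 hb1) (hGII b 1 (ha.trans hab) hb1 le_rfl)
    have hzero : (∫ t in s..b, G t) = 0 := by
      rw [intervalIntegral.integral_of_le hs.2]
      apply integral_eq_zero_of_ae
      have h1 : volume.restrict (Ioc s b) = volume.restrict (Ioo s b) :=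
        (Measure.restrict_congr_set Ioo_ae_eq_Ioc).symm
      rw [h1]
      have h2 : ∀ᵐ t ∂(volume.restrict (Ioo s b)),
          ∀ x ∉ E, w t x = 0 ∧ gradient (w t) x = 0 :=
        ae_restrict_of_ae_restrict_of_subset (Ioo_subset_Ioo (ha.trans hs.1) hb1) hsupp
      filter_upwards [h2, ae_restrict_mem measurableSet_Ioo] with t h3 h4
      have hne : γ t ∉ E := hnot t (lt_of_le_of_lt hs.1 h4.1) h4.2
      exact (h3 (γ t) hne).2
    calc V s = (∫ t in s..b, G t) + ∫ t in b..1, G t := hadj.symm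
      _ = V b := by rw [hzero, zero_add]
  -- if γ never meets E we contradict F(γ) ≠ 0
  have hWzero : (∀ t ∈ Icc (0:ℝ) 1, γ t ∉ E) → False := by
    intro hall
    apply hF0
    have hW : Wc w γ = 0 := by
      unfold Wc
      rw [intervalIntegral.integral_of_le zero_le_one, neg_eq_zero]
      apply integral_eq_zero_of_ae
      have h2 : ∀ᵐ t ∂(volume.restrict (Ioc (0:ℝ) 1)),
          ∀ x ∉ E, w t x = 0 ∧ gradient (w t) x = 0 := by
        rw [← hνdef, hνIoo]; exact hsupp
      filter_upwards [h2, ae_restrict_mem measurableSet_Ioc] with t h3 h4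
      exact (h3 (γ t) (hall t ⟨h4.1.le, h4.2⟩)).1
    unfold Fc
    rw [hW, zero_div]
  -- main argument
  intro t₀ ht₀
  by_contra hE0
  set S : Set ℝ := Icc (0:ℝ) 1 ∩ γ ⁻¹' E with hSdef
  have hScl : IsClosed S := hγcont.preimage_isClosed_of_isClosed isClosed_Icc hEcl
  have hA : ∃ a, a ∈ Icc (0:ℝ) t₀ ∧ (γ a ∈ E ∨ a = 0) ∧ ∀ t, a < t → t ≤ t₀ → γ t ∉ E := by
    by_cases hSL : (S ∩ Icc 0 t₀).Nonempty
    · have hmem : sSup (S ∩ Icc 0 t₀) ∈ S ∩ Icc 0 t₀ :=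
        (hScl.inter isClosed_Icc).csSup_mem hSL ⟨t₀, fun x hx => hx.2.2⟩
      refine ⟨sSup (S ∩ Icc 0 t₀), hmem.2, Or.inl hmem.1.2, ?_⟩
      intro t hat htt₀ htE
      have hmem2 : t ∈ S ∩ Icc 0 t₀ :=
        ⟨⟨⟨hmem.2.1.trans hat.le, htt₀.trans ht₀.2⟩, htE⟩, ⟨hmem.2.1.trans hat.le, htt₀⟩⟩
      exact absurd (le_csSup ⟨t₀, fun x hx => hx.2.2⟩ hmem2) (not_le.mpr hat)
    · refine ⟨0, ⟨le_rfl, ht₀.1⟩, Or.inr rfl, ?_⟩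
      intro t h0t htt₀ htE
      exact hSL ⟨t, ⟨⟨h0t.le, htt₀.trans ht₀.2⟩, htE⟩, ⟨h0t.le, htt₀⟩⟩
  obtain ⟨a, haI, haE, hanot⟩ := hA
  have hB : ∃ b, b ∈ Icc t₀ 1 ∧ (γ b ∈ E ∨ b = 1) ∧ ∀ t, t₀ ≤ t → t < b → γ t ∉ E := by
    by_cases hSR : (S ∩ Icc t₀ 1).Nonempty
    · have hmem : sInf (S ∩ Icc t₀ 1) ∈ S ∩ Icc t₀ 1 :=
        (hScl.inter isClosed_Icc).csInf_mem hSR ⟨t₀, fun x hx => hx.2.1⟩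
      refine ⟨sInf (S ∩ Icc t₀ 1), hmem.2, Or.inl hmem.1.2, ?_⟩
      intro t htt₀ htb htE
      have hmem2 : t ∈ S ∩ Icc t₀ 1 :=
        ⟨⟨⟨ht₀.1.trans htt₀, htb.le.trans hmem.2.2⟩, htE⟩, ⟨htt₀, htb.le.trans hmem.2.2⟩⟩
      exact absurd (csInf_le ⟨t₀, fun x hx => hx.2.1⟩ hmem2) (not_le.mpr htb)
    · refine ⟨1, ⟨ht₀.2, le_rfl⟩, Or.inr rfl, ?_⟩
      intro t htt₀ ht1 htE
      exact hSR ⟨t, ⟨⟨ht₀.1.trans htt₀, ht1.le⟩, htE⟩, ⟨htt₀, ht1.le⟩⟩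
  obtain ⟨b, hbI, hbE, hbnot⟩ := hB
  have ha0 : 0 ≤ a := haI.1
  have hb1 : b ≤ 1 := hbI.2
  have hab : a ≤ b := haI.2.trans hbI.1
  have hnotmid : ∀ t, a < t → t < b → γ t ∉ E := by
    intro t hat htb
    rcases le_or_gt t t₀ with hcase | hcase
    · exact hanot t hat hcase
    · exact hbnot t hcase.le htb
  have hVc : ∀ s ∈ Icc a b, V s = V b := hVeq a b ha0 hab hb1 hnotmid
  have hvconst : ∀ s ∈ Icc a b, v s = v b := by
    intro s hs
    rw [hvdef]
    simp only
    rw [hVc s hs]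
  have hIccsub : Icc a b ⊆ Icc (0:ℝ) 1 := Icc_subset_Icc ha0 hb1
  have hvII : ∀ x y : ℝ, 0 ≤ x → x ≤ y → y ≤ 1 → IntervalIntegrable v volume x y := by
    intro x y hx hxy hy
    apply ContinuousOn.intervalIntegrable
    apply hvcont.mono
    rw [uIcc_of_le hxy]
    exact Icc_subset_Icc hx hy
  have haff : ∀ t ∈ Icc a b, γ t = γ a + (t - a) • v b := by
    intro t ht
    have htI : t ∈ Icc (0:ℝ) 1 := hIccsub ht
    have haI' : a ∈ Icc (0:ℝ) 1 := hIccsub ⟨le_rfl, hab⟩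
    have hadj := intervalIntegral.integral_add_adjacent_intervals
      (hvII 0 a le_rfl ha0 haI'.2) (hvII a t ha0 ht.1 htI.2)
    have h1 : γ t = γ a + ∫ s in a..t, v s := by
      rw [hγv t htI, hγv a haI', ← hadj, add_assoc]
    rw [h1]
    congr 1
    rw [intervalIntegral.integral_of_le ht.1]
    rw [setIntegral_congr_fun measurableSet_Ioc
      (fun s hs => hvconst s ⟨hs.1.le, hs.2.trans ht.2⟩)]
    rw [setIntegral_const, Real.volume_real_Ioc_of_le ht.1]
  have ht₀ab : t₀ ∈ Icc a b := ⟨haI.2, hbI.1⟩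
  rcases haE with haE | ha0'
  · rcases hbE with hbE | hb1'
    · rcases eq_or_lt_of_le hab with heq | hlt
      · have ht0a : t₀ = a := le_antisymm (heq ▸ ht₀ab.2) ht₀ab.1
        exact hE0 (ht0a ▸ haE)
      · have hba : (0:ℝ) < b - a := sub_pos.mpr hlt
        set θ : ℝ := (t₀ - a) / (b - a) with hθdef
        have hθ0 : 0 ≤ θ := div_nonneg (sub_nonneg.mpr ht₀ab.1) hba.le
        have hθ1 : θ ≤ 1 := by
          rw [hθdef, div_le_one hba]
          linarith [ht₀ab.2]
        have hkey2 : γ t₀ = (1 - θ) • γ a + θ • γ b := by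
          rw [haff t₀ ht₀ab, haff b ⟨hab, le_rfl⟩]
          have hsub : (t₀ - a) = θ * (b - a) := by
            rw [hθdef]
            field_simp
          rw [hsub]
          module
        exact hE0 (hkey2 ▸ hEconv haE hbE (by linarith) hθ0 (by ring))
    · have hvb : v b = 0 := by rw [hb1']; exact hv1
      have hconst := haff t₀ ht₀ab
      rw [hvb, smul_zero, add_zero] at hconst
      exact hE0 (hconst ▸ haE)
  · have hvb : v b = 0 := by
      have hva := hvconst a ⟨le_rfl, hab⟩
      rw [ha0', hv0] at hva
      exact hva.symm
    have hconst := haff t₀ ht₀ab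
    rw [hvb, smul_zero, add_zero] at hconst
    rcases hbE with hbE | hb1'
    · have hgb := haff b ⟨hab, le_rfl⟩
      rw [hvb, smul_zero, add_zero] at hgb
      exact hE0 (by rw [hconst, ← hgb]; exact hbE)
    · apply hWzero
      intro t ht
      have h1 := haff t (by rw [ha0', hb1']; exact ht)
      rw [hvb, smul_zero, add_zero] at h1
      rw [h1, ← hconst]
      exact hE0
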